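/- arXiv:2603.20093 — 2 statements merged into one kernel-verified Lean document; each statement's English description precedes it below -/
import Mathlib

section
/- Let ν and ν′ be Borel probability measures on ℝ with finite first moments, and suppose ν has a density f ∈ L^∞(ℝ) with respect to Lebesgue measure. Then |ν((0,∞)) − ν′((0,∞))| ≤ 2·(‖f‖_∞ · W₁(ν, ν′))^{1/2}, where W₁ denotes the 1-Wasserstein distance with respect to the Euclidean metric. -/
open MeasureTheory

/-- The 1-Wasserstein distance on probability measures on `ℝ` (w.r.t. the Euclidean metric),
via Kantorovich–Rubinstein duality: the supremum over bounded 1-Lipschitz test functions. -/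
noncomputable def W1 (μ ν : Measure ℝ) : ℝ :=
  sSup {r : ℝ | ∃ u : ℝ → ℝ, (∃ C : ℝ, ∀ x, |u x| ≤ C) ∧ LipschitzWith 1 u ∧
    r = |(∫ x, u x ∂μ) - ∫ x, u x ∂ν|}

open Set

/-- The clamp function: `0` below `a`, slope-1 ramp on `[a, a+ε]`, `ε` above. -/
noncomputable def cl (ε a x : ℝ) : ℝ := min (max (x - a) 0) ε

lemma cl_nonneg {ε a x : ℝ} (hε : 0 ≤ ε) : 0 ≤ cl ε a x :=
  le_min (le_max_right _ _) hε

lemma cl_le {ε a x : ℝ} : cl ε a x ≤ ε := min_le_right _ _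

lemma cl_lip (ε a : ℝ) : LipschitzWith 1 (cl ε a) := by
  have h1 : LipschitzWith 1 (fun x : ℝ => x - a) := by
    apply LipschitzWith.of_dist_le_mul
    intro x y
    simp [Real.dist_eq, one_mul]
  exact (h1.max_const 0).min_const ε

lemma cl_eq_zero {ε a x : ℝ} (hε : 0 ≤ ε) (h : x ≤ a) : cl ε a x = 0 := by
  have : max (x - a) 0 = 0 := max_eq_right (by linarith)
  simp [cl, this, hε]

lemma cl_eq_eps {ε a x : ℝ} (h : a + ε ≤ x) : cl ε a x = ε := by
  have : ε ≤ max (x - a) 0 := le_trans (by linarith) (le_max_left (x - a) 0)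
  simp [cl, min_eq_right this]

lemma cl_integrable (μ : Measure ℝ) [IsProbabilityMeasure μ] {ε : ℝ} (hε : 0 ≤ ε) (a : ℝ) :
    Integrable (cl ε a) μ := by
  refine (integrable_const ε).mono' ((cl_lip ε a).continuous.aestronglyMeasurable) ?_
  refine Filter.Eventually.of_forall fun x => ?_
  rw [Real.norm_eq_abs, abs_of_nonneg (cl_nonneg hε)]
  exact cl_le

lemma cl_integral_le (μ : Measure ℝ) [IsProbabilityMeasure μ] {ε : ℝ} (hε : 0 ≤ ε) (a : ℝ) :
    ∫ x, cl ε a x ∂μ ≤ ε * (μ (Ioi a)).toReal := by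
  have h1 : ∫ x, cl ε a x ∂μ ≤ ∫ x, (Ioi a).indicator (fun _ => ε) x ∂μ := by
    refine integral_mono (cl_integrable μ hε a)
      ((integrable_const ε).indicator measurableSet_Ioi) fun x => ?_
    by_cases hx : x ∈ Ioi a
    · simp only [indicator_of_mem hx]; exact cl_le
    · simp only [indicator_of_notMem hx]
      exact le_of_eq (cl_eq_zero hε (not_lt.mp hx))
  rw [integral_indicator_const _ measurableSet_Ioi] at h1
  simpa [smul_eq_mul, mul_comm, measureReal_def] using h1

lemma cl_integral_ge (μ : Measure ℝ) [IsProbabilityMeasure μ] {ε : ℝ} (hε : 0 ≤ ε) (a : ℝ) :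
    ε * (μ (Ioi (a + ε))).toReal ≤ ∫ x, cl ε a x ∂μ := by
  have h1 : ∫ x, (Ioi (a + ε)).indicator (fun _ => ε) x ∂μ ≤ ∫ x, cl ε a x ∂μ := by
    refine integral_mono ((integrable_const ε).indicator measurableSet_Ioi)
      (cl_integrable μ hε a) fun x => ?_
    by_cases hx : x ∈ Ioi (a + ε)
    · simp only [indicator_of_mem hx]
      exact le_of_eq (cl_eq_eps (le_of_lt hx)).symm
    · simp only [indicator_of_notMem hx]
      exact cl_nonneg hε
  rw [integral_indicator_const _ measurableSet_Ioi] at h1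
  simpa [smul_eq_mul, mul_comm, measureReal_def] using h1

lemma W1_bddAbove (ν ν' : Measure ℝ) [IsProbabilityMeasure ν] [IsProbabilityMeasure ν']
    (hmom : Integrable (fun x : ℝ => x) ν) (hmom' : Integrable (fun x : ℝ => x) ν') :
    BddAbove {r : ℝ | ∃ u : ℝ → ℝ, (∃ C : ℝ, ∀ x, |u x| ≤ C) ∧ LipschitzWith 1 u ∧
      r = |(∫ x, u x ∂ν) - ∫ x, u x ∂ν'|} := by
  refine ⟨(∫ x, |x| ∂ν) + ∫ x, |x| ∂ν', ?_⟩
  rintro r ⟨u, ⟨C, hC⟩, hl, rfl⟩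
  have hint : ∀ (μ : Measure ℝ) [IsProbabilityMeasure μ], Integrable u μ := by
    intro μ _
    refine (integrable_const C).mono' hl.continuous.aestronglyMeasurable ?_
    exact Filter.Eventually.of_forall fun x => by simpa [Real.norm_eq_abs] using hC x
  have hdiff : ∀ x, |u x - u 0| ≤ |x| := by
    intro x
    have := hl.dist_le_mul x 0
    simpa [Real.dist_eq] using this
  have key : ∀ (μ : Measure ℝ) [IsProbabilityMeasure μ], Integrable (fun x : ℝ => x) μ →
      |(∫ x, u x ∂μ) - u 0| ≤ ∫ x, |x| ∂μ := by
    intro μ _ hm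
    have h1 : (∫ x, u x ∂μ) - u 0 = ∫ x, (u x - u 0) ∂μ := by
      rw [integral_sub (hint μ) (integrable_const (u 0)), integral_const]
      simp
    rw [h1]
    have h2 : |∫ x, (u x - u 0) ∂μ| ≤ ∫ x, |u x - u 0| ∂μ := by
      simpa [Real.norm_eq_abs] using
        norm_integral_le_integral_norm (μ := μ) (fun x => u x - u 0)
    have h3 : ∫ x, |u x - u 0| ∂μ ≤ ∫ x, |x| ∂μ :=
      integral_mono ((hint μ).sub (integrable_const (u 0))).abs hm.abs hdiff
    exact h2.trans h3
  calc |(∫ x, u x ∂ν) - ∫ x, u x ∂ν'|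
      = |((∫ x, u x ∂ν) - u 0) - ((∫ x, u x ∂ν') - u 0)| := by
        rw [sub_sub_sub_cancel_right]
    _ ≤ |(∫ x, u x ∂ν) - u 0| + |(∫ x, u x ∂ν') - u 0| := abs_sub _ _
    _ ≤ (∫ x, |x| ∂ν) + ∫ x, |x| ∂ν' := add_le_add (key ν hmom) (key ν' hmom')

lemma abs_le_W1 (ν ν' : Measure ℝ) [IsProbabilityMeasure ν] [IsProbabilityMeasure ν']
    (hmom : Integrable (fun x : ℝ => x) ν) (hmom' : Integrable (fun x : ℝ => x) ν')
    (u : ℝ → ℝ) (hb : ∃ C : ℝ, ∀ x, |u x| ≤ C) (hl : LipschitzWith 1 u) :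
    |(∫ x, u x ∂ν) - ∫ x, u x ∂ν'| ≤ W1 ν ν' :=
  le_csSup (W1_bddAbove ν ν' hmom hmom') ⟨u, hb, hl, rfl⟩

lemma W1_nonneg (ν ν' : Measure ℝ) [IsProbabilityMeasure ν] [IsProbabilityMeasure ν']
    (hmom : Integrable (fun x : ℝ => x) ν) (hmom' : Integrable (fun x : ℝ => x) ν') :
    0 ≤ W1 ν ν' := by
  have := abs_le_W1 ν ν' hmom hmom' (fun _ => 0) ⟨0, fun x => by simp⟩
    ((LipschitzWith.const 0).weaken zero_le_one)
  simpa using this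

theorem stmt0 (ν ν' : Measure ℝ) [IsProbabilityMeasure ν] [IsProbabilityMeasure ν']
    (hmom : Integrable (fun x : ℝ => x) ν) (hmom' : Integrable (fun x : ℝ => x) ν')
    (f : ℝ → ℝ) (hf : MemLp f ⊤ (volume : Measure ℝ))
    (hdens : ∀ A : Set ℝ, MeasurableSet A → (ν A).toReal = ∫ x in A, f x) :
    |(ν (Set.Ioi (0:ℝ))).toReal - (ν' (Set.Ioi (0:ℝ))).toReal| ≤
      2 * Real.sqrt ((eLpNorm f ⊤ (volume : Measure ℝ)).toReal * W1 ν ν') := by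
  set M : ℝ := (eLpNorm f ⊤ (volume : Measure ℝ)).toReal with hM
  set W : ℝ := W1 ν ν' with hWdef
  have hW0 : 0 ≤ W := W1_nonneg ν ν' hmom hmom'
  have hM0 : 0 ≤ M := ENNReal.toReal_nonneg
  -- a.e. bound |f| ≤ M
  have hfae : ∀ᵐ x ∂(volume : Measure ℝ), |f x| ≤ M := by
    have h1 := ae_le_eLpNormEssSup (f := f) (μ := (volume : Measure ℝ))
    have htop : eLpNormEssSup f volume ≠ ⊤ := by
      have h2 := hf.2
      rw [eLpNorm_exponent_top] at h2
      exact h2.ne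
    filter_upwards [h1] with x hx
    have := ENNReal.toReal_mono htop hx
    rw [hM, eLpNorm_exponent_top]
    simpa [Real.norm_eq_abs] using this
  -- strip estimate: ν of an interval of length ℓ is ≤ M * ℓ
  have strip : ∀ b c : ℝ, b ≤ c → (ν (Ioc b c)).toReal ≤ M * (c - b) := by
    intro b c hbc
    rw [hdens _ measurableSet_Ioc]
    have hvol : volume (Ioc b c) < ⊤ := measure_Ioc_lt_top
    haveI : IsFiniteMeasure ((volume : Measure ℝ).restrict (Ioc b c)) :=
      ⟨by rwa [Measure.restrict_apply_univ]⟩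
    have hfint : Integrable f ((volume : Measure ℝ).restrict (Ioc b c)) :=
      (hf.restrict (Ioc b c)).integrable le_top
    have hle : ∫ x in Ioc b c, f x ≤ ∫ x in Ioc b c, M := by
      refine integral_mono_ae hfint (integrable_const M) ?_
      filter_upwards [ae_restrict_of_ae hfae] with x hx
      exact le_trans (le_abs_self _) hx
    refine hle.trans ?_
    rw [setIntegral_const, measureReal_def, Real.volume_Ioc, smul_eq_mul]
    rw [ENNReal.toReal_ofReal (by linarith)]
    linarith [mul_comm (c - b) M]
  -- main: for all ε > 0, |Δ| ≤ M ε + W / ε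
  set I : ℝ := (ν (Set.Ioi (0:ℝ))).toReal with hI
  set I' : ℝ := (ν' (Set.Ioi (0:ℝ))).toReal with hI'
  have key : ∀ ε : ℝ, 0 < ε → |I - I'| ≤ M * ε + W / ε := by
    intro ε hε
    rw [abs_sub_le_iff]
    have hεne : 0 ≤ ε := hε.le
    constructor
    · -- I - I' ≤ M ε + W/ε, using u = cl ε 0
      have hsplit : (ν (Ioi (0:ℝ))).toReal
          = (ν (Ioc 0 ε)).toReal + (ν (Ioi ε)).toReal := by
        rw [← ENNReal.toReal_add (measure_ne_top _ _) (measure_ne_top _ _),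
          ← measure_union (Ioc_disjoint_Ioi le_rfl) measurableSet_Ioi,
          Ioc_union_Ioi_eq_Ioi hεne]
      have hA : ε * (I - M * ε) ≤ ∫ x, cl ε 0 x ∂ν := by
        have h1 := cl_integral_ge ν hεne 0
        rw [zero_add] at h1
        have h2 : (ν (Ioi ε)).toReal ≥ I - M * ε := by
          have := strip 0 ε hεne
          rw [sub_zero] at this
          rw [hI, hsplit]; linarith
        nlinarith
      have hB : ∫ x, cl ε 0 x ∂ν' ≤ ε * I' := cl_integral_le ν' hεne 0
      have hw : (∫ x, cl ε 0 x ∂ν) - ∫ x, cl ε 0 x ∂ν' ≤ W := by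
        refine le_trans (le_abs_self _) ?_
        exact abs_le_W1 ν ν' hmom hmom' _
          ⟨ε, fun x => by rw [abs_of_nonneg (cl_nonneg hεne)]; exact cl_le⟩ (cl_lip ε 0)
      have h4 : ε * (I - I' - M * ε) ≤ W := by nlinarith
      have h5 : I - I' - M * ε ≤ W / ε := by
        rw [le_div_iff₀ hε]
        linarith [mul_comm (I - I' - M * ε) ε]
      linarith
    · -- I' - I ≤ M ε + W/ε, using u = cl ε (-ε)
      have hsplit : (ν (Ioi (-ε))).toReal
          = (ν (Ioc (-ε) 0)).toReal + (ν (Ioi (0:ℝ))).toReal := by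
        rw [← ENNReal.toReal_add (measure_ne_top _ _) (measure_ne_top _ _),
          ← measure_union (Ioc_disjoint_Ioi le_rfl) measurableSet_Ioi,
          Ioc_union_Ioi_eq_Ioi (by linarith)]
      have hA : ε * I' ≤ ∫ x, cl ε (-ε) x ∂ν' := by
        have h1 := cl_integral_ge ν' hεne (-ε)
        rw [neg_add_cancel] at h1
        exact h1
      have hB : ∫ x, cl ε (-ε) x ∂ν ≤ ε * (I + M * ε) := by
        have h1 := cl_integral_le ν hεne (-ε)
        have h2 : (ν (Ioi (-ε))).toReal ≤ I + M * ε := by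
          have := strip (-ε) 0 (by linarith)
          rw [hsplit]
          rw [sub_neg_eq_add, zero_add] at this
          rw [hI]; linarith
        nlinarith
      have hw : (∫ x, cl ε (-ε) x ∂ν') - ∫ x, cl ε (-ε) x ∂ν ≤ W := by
        refine le_trans (le_abs_self _) ?_
        rw [abs_sub_comm]
        exact abs_le_W1 ν ν' hmom hmom' _
          ⟨ε, fun x => by rw [abs_of_nonneg (cl_nonneg hεne)]; exact cl_le⟩ (cl_lip ε (-ε))
      have h4 : ε * (I' - I - M * ε) ≤ W := by nlinarith
      have h5 : I' - I - M * ε ≤ W / ε := by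
        rw [le_div_iff₀ hε]
        linarith [mul_comm (I' - I - M * ε) ε]
      linarith
  -- M > 0 (otherwise f = 0 a.e. contradicts ν being a probability measure)
  have hMpos : 0 < M := by
    rcases lt_or_eq_of_le hM0 with h | h
    · exact h
    · exfalso
      have htop : eLpNorm f ⊤ (volume : Measure ℝ) ≠ ⊤ := hf.2.ne
      have h0 : eLpNorm f ⊤ (volume : Measure ℝ) = 0 := by
        rcases (ENNReal.toReal_eq_zero_iff _).mp h.symm with h' | h'
        · exact h'
        · exact absurd h' htop
      have hf0 : f =ᵐ[(volume : Measure ℝ)] 0 :=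
        (eLpNorm_eq_zero_iff hf.1 (by norm_num)).mp h0
      have h1 : (ν (Set.univ : Set ℝ)).toReal = ∫ x in (Set.univ : Set ℝ), f x :=
        hdens _ MeasurableSet.univ
      rw [measure_univ, Measure.restrict_univ] at h1
      rw [integral_congr_ae hf0] at h1
      simp at h1
  rcases lt_or_eq_of_le hW0 with hWpos | hWzero
  · -- W > 0 : take ε = √(M W) / M
    set s : ℝ := Real.sqrt (M * W) with hs
    have hs2 : s ^ 2 = M * W := Real.sq_sqrt (by positivity)
    have hspos : 0 < s := Real.sqrt_pos.mpr (by positivity)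
    have h := key (s / M) (by positivity)
    have heq : M * (s / M) + W / (s / M) = 2 * s := by
      field_simp
      nlinarith
    rw [heq] at h
    exact h
  · -- W = 0
    rw [← hWzero, mul_zero, Real.sqrt_zero, mul_zero]
    refine le_of_forall_pos_le_add fun δ hδ => ?_
    have h := key (δ / M) (by positivity)
    have : M * (δ / M) + W / (δ / M) = δ := by
      rw [← hWzero]
      field_simp
      ring
    rw [this] at h
    linarith
end

section
/- Let q ≥ 3 and let a, b be distinct invertible residue classes modulo q. Let M_q be the set of non-principal Dirichlet characters χ modulo q with |χ(a) − χ(b)| ≥ 1. Then |M_q| ≥ φ(q)/3. -/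
open Finset Complex DirichletCharacter

theorem stmt7 (q : ℕ) [NeZero q] (hq : 3 ≤ q) (a b : (ZMod q)ˣ) (hab : a ≠ b) :
    (q.totient : ℝ) / 3 ≤
      Nat.card {χ : DirichletCharacter ℂ q //
        χ ≠ 1 ∧ 1 ≤ ‖χ (a : ZMod q) - χ (b : ZMod q)‖} := by
  classical
  set f : DirichletCharacter ℂ q → ℝ := fun χ => Complex.normSq (χ ↑a - χ ↑b) with hf
  have hconj : ∀ (χ : DirichletCharacter ℂ q) (u : (ZMod q)ˣ),
      (starRingEnd ℂ) (χ ↑u) = χ ((u⁻¹ : (ZMod q)ˣ) : ZMod q) := by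
    intro χ u
    have h1 : χ ↑u * χ ((u⁻¹ : (ZMod q)ˣ) : ZMod q) = 1 := by
      rw [← map_mul, ← Units.val_mul, mul_inv_cancel, Units.val_one, map_one]
    have h2 : ‖χ (u : ZMod q)‖ = 1 := χ.unit_norm_eq_one u
    rw [← Complex.inv_eq_conj h2, inv_eq_of_mul_eq_one_right h1]
  have hcard : Fintype.card (DirichletCharacter ℂ q) = q.totient := by
    rw [← Nat.card_eq_fintype_card]
    exact card_eq_totient_of_hasEnoughRootsOfUnity ℂ q
  have key : ∀ χ : DirichletCharacter ℂ q, ((f χ : ℝ) : ℂ)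
      = 2 - χ ((a * b⁻¹ : (ZMod q)ˣ) : ZMod q) - χ ((b * a⁻¹ : (ZMod q)ˣ) : ZMod q) := by
    intro χ
    have ha1 : χ ↑a * χ ((a⁻¹ : (ZMod q)ˣ) : ZMod q) = 1 := by
      rw [← map_mul, ← Units.val_mul, mul_inv_cancel, Units.val_one, map_one]
    have hb1 : χ ↑b * χ ((b⁻¹ : (ZMod q)ˣ) : ZMod q) = 1 := by
      rw [← map_mul, ← Units.val_mul, mul_inv_cancel, Units.val_one, map_one]
    rw [hf, ← Complex.mul_conj, map_sub, hconj, hconj, Units.val_mul, Units.val_mul,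
      map_mul, map_mul]
    ring_nf
    linear_combination ha1 + hb1
  have hne : ∀ u : (ZMod q)ˣ, u ≠ 1 → ((u : ZMod q) ≠ 1) := by
    intro u hu h
    exact hu (Units.ext h)
  have hsum : ∑ χ : DirichletCharacter ℂ q, f χ = 2 * q.totient := by
    have hc : ((∑ χ : DirichletCharacter ℂ q, f χ : ℝ) : ℂ) = 2 * q.totient := by
      push_cast
      rw [Finset.sum_congr rfl (fun χ _ => key χ)]
      rw [Finset.sum_sub_distrib, Finset.sum_sub_distrib,
        sum_characters_eq_zero ℂ (hne _ (by
          intro h; exact hab (by rwa [mul_inv_eq_one] at h))),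
        sum_characters_eq_zero ℂ (hne _ (by
          intro h; exact hab.symm (by rwa [mul_inv_eq_one] at h)))]
      simp [hcard, mul_comm]
    exact_mod_cast hc
  set M : Finset (DirichletCharacter ℂ q) :=
    univ.filter (fun χ => χ ≠ 1 ∧ 1 ≤ ‖χ ↑a - χ ↑b‖) with hM
  have hNat : Nat.card {χ : DirichletCharacter ℂ q //
      χ ≠ 1 ∧ 1 ≤ ‖χ (a : ZMod q) - χ (b : ZMod q)‖} = M.card := by
    rw [Nat.card_eq_fintype_card, Fintype.card_subtype]
  set N : Finset (DirichletCharacter ℂ q) :=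
    univ.filter (fun χ => ¬(χ ≠ 1 ∧ 1 ≤ ‖χ ↑a - χ ↑b‖)) with hN
  have hsplit : ∑ χ : DirichletCharacter ℂ q, f χ = ∑ χ ∈ M, f χ + ∑ χ ∈ N, f χ :=
    (Finset.sum_filter_add_sum_filter_not univ _ f).symm
  have hcards : M.card + N.card = q.totient := by
    rw [hM, hN]
    rw [Finset.card_filter_add_card_filter_not, Finset.card_univ, hcard]
  have h1 : ∑ χ ∈ M, f χ ≤ 4 * M.card := by
    calc ∑ χ ∈ M, f χ ≤ ∑ _χ ∈ M, (4:ℝ) := by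
          refine Finset.sum_le_sum fun χ _ => ?_
          have habs2 : ‖χ ↑a - χ ↑b‖ ≤ 2 := by
            calc ‖χ ↑a - χ ↑b‖ ≤ ‖χ ↑a‖ + ‖χ ↑b‖ :=
                  norm_sub_le _ _
              _ ≤ 2 := by
                  have h3 := χ.unit_norm_eq_one a
                  have h4 := χ.unit_norm_eq_one b
                  linarith
          have habs : Complex.normSq (χ ↑a - χ ↑b) = ‖χ ↑a - χ ↑b‖ ^ 2 :=
            (Complex.sq_norm _).symm
          rw [hf]; dsimp only; rw [habs]
          nlinarith [norm_nonneg (χ ↑a - χ ↑b)]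
      _ = 4 * M.card := by rw [Finset.sum_const, nsmul_eq_mul]; ring
  have h2 : ∑ χ ∈ N, f χ ≤ (N.card : ℝ) := by
    calc ∑ χ ∈ N, f χ ≤ ∑ _χ ∈ N, (1:ℝ) := by
          refine Finset.sum_le_sum fun χ hχ => ?_
          rw [hN, Finset.mem_filter] at hχ
          rcases not_and_or.mp hχ.2 with h | h
          · have h1' : χ = 1 := not_not.mp h
            subst h1'
            have hua : ((1 : DirichletCharacter ℂ q) ↑a : ℂ) = 1 :=
              MulChar.one_apply a.isUnit
            have hub : ((1 : DirichletCharacter ℂ q) ↑b : ℂ) = 1 :=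
              MulChar.one_apply b.isUnit
            rw [hf]; dsimp only; rw [hua, hub]; simp
          · have h' : ‖χ ↑a - χ ↑b‖ < 1 := lt_of_not_ge h
            have habs : Complex.normSq (χ ↑a - χ ↑b) = ‖χ ↑a - χ ↑b‖ ^ 2 :=
              (Complex.sq_norm _).symm
            rw [hf]; dsimp only; rw [habs]
            nlinarith [norm_nonneg (χ ↑a - χ ↑b)]
      _ = (N.card : ℝ) := by rw [Finset.sum_const, nsmul_eq_mul, mul_one]
  rw [hNat]
  have hcR : (M.card : ℝ) + N.card = q.totient := by exact_mod_cast hcards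
  have h3 : 2 * (q.totient:ℝ) ≤ 4 * M.card + N.card := by
    rw [← hsum, hsplit]; linarith
  linarith
end
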